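/- Let A be a left noetherian ring and a ∈ A with Aa = aA. Then the Rees ring B = ⊕_{i∈ℕ} a^i A u^i (a subring of the polynomial ring A[u]) is a graded ring, and if the associated graded ring gr A of a noetherian filtration on A is noetherian then B is left noetherian. -/

import Mathlib

open Polynomial

section Aux

variable {A : Type} [Ring A] {a : A}

/-- iterate `Aa ⊆ aA` -/
lemma pow_push_right (ha₁ : ∀ x : A, ∃ y : A, x * a = a * y) :
    ∀ (n : ℕ) (x : A), ∃ y : A, x * a ^ n = a ^ n * y := by
  intro n
  induction n with
  | zero => exact fun x => ⟨x, by simp⟩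
  | succ n ih =>
    intro x
    obtain ⟨y, hy⟩ := ha₁ x
    obtain ⟨z, hz⟩ := ih y
    exact ⟨z, by rw [pow_succ', mul_assoc, ← mul_assoc x a, hy, mul_assoc, hz, ← mul_assoc]⟩

/-- iterate `aA ⊆ Aa` -/
lemma pow_push_left (ha₂ : ∀ y : A, ∃ x : A, x * a = a * y) :
    ∀ (n : ℕ) (y : A), ∃ x : A, x * a ^ n = a ^ n * y := by
  intro n
  induction n with
  | zero => exact fun y => ⟨y, by simp⟩
  | succ n ih =>
    intro y
    obtain ⟨x, hx⟩ := ih y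
    obtain ⟨z, hz⟩ := ha₂ x
    exact ⟨z, by rw [pow_succ', ← mul_assoc, hz, mul_assoc, hx, ← mul_assoc]⟩

/-- the additive subgroup `a^n A` of `A` -/
def aPow (a : A) (n : ℕ) : AddSubgroup A where
  carrier := {z | ∃ w : A, z = a ^ n * w}
  zero_mem' := ⟨0, by simp⟩
  add_mem' := by rintro x y ⟨u, rfl⟩ ⟨v, rfl⟩; exact ⟨u + v, by rw [mul_add]⟩
  neg_mem' := by rintro x ⟨u, rfl⟩; exact ⟨-u, by rw [mul_neg]⟩

lemma mem_aPow {n : ℕ} {z : A} : z ∈ aPow a n ↔ ∃ w : A, z = a ^ n * w := Iff.rfl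

/-- The Rees ring. -/
def reesRing (a : A) (ha₁ : ∀ x : A, ∃ y : A, x * a = a * y) : Subring (Polynomial A) where
  carrier := {q | ∀ i, q.coeff i ∈ aPow a i}
  zero_mem' := fun i => ⟨0, by simp⟩
  one_mem' := by
    intro i
    rcases Nat.eq_zero_or_pos i with h | h
    · exact ⟨1, by simp [h]⟩
    · exact ⟨0, by simp [coeff_one, Nat.pos_iff_ne_zero.mp h]⟩
  add_mem' := by
    intro p q hp hq i
    rw [coeff_add]; exact add_mem (hp i) (hq i)
  neg_mem' := by
    intro p hp i
    rw [coeff_neg]; exact neg_mem (hp i)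
  mul_mem' := by
    intro p q hp hq k
    rw [coeff_mul]
    refine sum_mem fun ij hij => ?_
    obtain ⟨x, hx⟩ := hp ij.1
    obtain ⟨y, hy⟩ := hq ij.2
    obtain ⟨x', hx'⟩ := pow_push_right ha₁ ij.2 x
    refine ⟨x' * y, ?_⟩
    have hk : ij.1 + ij.2 = k := Finset.HasAntidiagonal.mem_antidiagonal.mp hij
    rw [hx, hy, ← hk, pow_add, mul_assoc, ← mul_assoc x, hx', mul_assoc, mul_assoc]

end Aux

theorem rees_ring_graded_and_noetherian
    (A : Type) [Ring A] [IsNoetherianRing A] (a : A)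
    (ha₁ : ∀ x : A, ∃ y : A, x * a = a * y)
    (ha₂ : ∀ y : A, ∃ x : A, x * a = a * y)
    -- an exhaustive multiplicative filtration `F_•A`
    (F : ℕ → AddSubgroup A)
    (hmono : Monotone F)
    (hexh : ∀ x : A, ∃ p, x ∈ F p)
    (hone : (1 : A) ∈ F 0)
    (hmul : ∀ p q (x y : A), x ∈ F p → y ∈ F q → x * y ∈ F (p + q))
    -- the associated graded ring, modelled abstractly
    (G : Type) [Ring G] [IsNoetherianRing G]
    (𝒜 : ℕ → AddSubgroup G)
    (hinternal : DirectSum.IsInternal 𝒜)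
    (σ : ∀ p, F p →+ G)
    (hrange : ∀ p, (σ p).range = 𝒜 p)
    (hker0 : ∀ x : F 0, σ 0 x = 0 ↔ (x : A) = 0)
    (hker : ∀ p (x : F (p + 1)), σ (p + 1) x = 0 ↔ (x : A) ∈ F p)
    (hσone : σ 0 ⟨1, hone⟩ = 1)
    (hσmul : ∀ p q (x : F p) (y : F q),
      σ (p + q) ⟨(x : A) * (y : A), hmul p q x y x.2 y.2⟩ = σ p x * σ q y) :
    ∃ B : Subring (Polynomial A),
      (∀ q : Polynomial A, q ∈ B ↔ ∀ i, ∃ x : A, q.coeff i = a ^ i * x) ∧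
      (∀ q ∈ B, ∀ i, (Polynomial.C (q.coeff i)) * Polynomial.X ^ i ∈ B) ∧
      IsNoetherianRing B := by
  classical
  refine ⟨reesRing a ha₁, fun q => Iff.rfl, ?_, ?_⟩
  · -- graded: homogeneous components stay in B
    intro q hq i j
    obtain ⟨x, hx⟩ := hq i
    show (C (q.coeff i) * X ^ i).coeff j ∈ aPow a j
    rw [C_mul_X_pow_eq_monomial, coeff_monomial]
    split_ifs with h
    · subst h; exact ⟨x, hx⟩
    · exact ⟨0, by simp⟩
  · -- noetherian
    set B : Subring (Polynomial A) := reesRing a ha₁ with hB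
    rw [isNoetherianRing_iff_ideal_fg]
    intro I
    -- the leading coefficient ideals
    set L : ℕ → Submodule A A := fun n =>
      { carrier := {c | ∃ q : B, q ∈ I ∧ (q : A[X]).degree ≤ (n : ℕ) ∧
          (q : A[X]).coeff n = a ^ n * c}
        zero_mem' := ⟨0, I.zero_mem, by simp, by simp⟩
        add_mem' := by
          rintro c d ⟨p, hpI, hpd, hpc⟩ ⟨q, hqI, hqd, hqc⟩
          refine ⟨p + q, I.add_mem hpI hqI, ?_, ?_⟩
          · push_cast
            exact le_trans (degree_add_le _ _) (max_le hpd hqd)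
          · push_cast
            rw [coeff_add, hpc, hqc, mul_add]
        smul_mem' := by
          rintro x c ⟨p, hpI, hpd, hpc⟩
          obtain ⟨x', hx'⟩ := pow_push_left ha₂ n x
          have hx'B : (C x' : A[X]) ∈ B := by
            intro i
            rcases Nat.eq_zero_or_pos i with h | h
            · exact ⟨x', by simp [h]⟩
            · exact ⟨0, by simp [coeff_C, Nat.pos_iff_ne_zero.mp h]⟩
          refine ⟨⟨C x', hx'B⟩ * p, I.smul_mem _ hpI, ?_, ?_⟩
          · push_cast
            refine le_trans (degree_mul_le _ _) ?_
            refine le_trans (add_le_add degree_C_le hpd) ?_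
            simp
          · push_cast
            rw [coeff_C_mul, hpc, ← mul_assoc, hx', mul_assoc, smul_eq_mul]
      } with hL
    have hLmono : Monotone L := by
      apply monotone_nat_of_le_succ
      intro n c hc
      obtain ⟨p, hpI, hpd, hpc⟩ := hc
      have haXB : (C a * X : A[X]) ∈ B := by
        intro i
        rcases Nat.lt_or_ge i 1 with h | h
        · interval_cases i
          · exact ⟨0, by simp⟩
        rcases Nat.lt_or_ge i 2 with h2 | h2
        · interval_cases i
          · exact ⟨1, by simp⟩
        · refine ⟨0, ?_⟩
          rw [coeff_C_mul, coeff_X, if_neg (by omega), mul_zero, mul_zero]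
      refine ⟨⟨C a * X, haXB⟩ * p, I.smul_mem _ hpI, ?_, ?_⟩
      · push_cast
        refine le_trans (degree_mul_le _ _) ?_
        refine le_trans (add_le_add (degree_mul_le _ _) hpd) ?_
        refine le_trans (add_le_add_left (add_le_add degree_C_le degree_X_le) _) ?_
        rw [← Nat.cast_one]
        rw [← Nat.cast_add]
        norm_cast
        omega
      · push_cast
        rw [mul_assoc, X_mul, coeff_C_mul]
        have h2 : ((p : A[X]) * X).coeff (n + 1) = (p : A[X]).coeff n := by
          simpa using coeff_mul_X_pow (p : A[X]) 1 n
        rw [h2, hpc, ← mul_assoc, pow_succ', mul_assoc]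
    -- stabilization
    obtain ⟨N, hN⟩ := monotone_stabilizes_iff_noetherian.mpr (inferInstance : IsNoetherian A A)
      ⟨L, hLmono⟩
    have hNL : ∀ m, N ≤ m → L N = L m := fun m hm => hN m hm
    -- generators of each L m, m ≤ N
    have hfg : ∀ m, (L m).FG := fun m => IsNoetherian.noetherian (L m)
    choose S hS using fun m => hfg m
    -- witness function
    set w : ℕ → A → B := fun m c =>
      if h : ∃ q : B, q ∈ I ∧ (q : A[X]).degree ≤ (m : ℕ) ∧ (q : A[X]).coeff m = a ^ m * c
      then h.choose else 0 with hw
    have hwI : ∀ m c, w m c ∈ I := by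
      intro m c
      simp only [hw]
      split_ifs with h
      · exact h.choose_spec.1
      · exact I.zero_mem
    have hwspec : ∀ m c, c ∈ L m →
        ((w m c : B) : A[X]).degree ≤ (m : ℕ) ∧ ((w m c : B) : A[X]).coeff m = a ^ m * c := by
      intro m c hc
      have h : ∃ q : B, q ∈ I ∧ (q : A[X]).degree ≤ (m : ℕ) ∧ (q : A[X]).coeff m = a ^ m * c := hc
      simp only [hw, dif_pos h]
      exact ⟨h.choose_spec.2.1, h.choose_spec.2.2⟩
    set T : Finset B := (Finset.range (N + 1)).biUnion (fun m => (S m).image (w m)) with hT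
    refine ⟨T, le_antisymm ?_ ?_⟩
    · -- span T ⊆ I
      rw [Ideal.span_le]
      intro q hq
      simp only [hT, Finset.coe_biUnion, Set.mem_iUnion, Finset.coe_image, Set.mem_image] at hq
      obtain ⟨m, _, c, _, rfl⟩ := hq
      exact hwI m c
    · -- I ⊆ span T : induction on degree
      intro q hqI
      have key : ∀ k : ℕ, ∀ q : B, q ∈ I → (q : A[X]).natDegree ≤ k →
          q ∈ Ideal.span (T : Set B) := by
        intro k
        induction k using Nat.strong_induction_on with
        | _ k ih =>
          intro q hqI hdeg
          by_cases hq0 : q = 0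
          · rw [hq0]; exact Ideal.zero_mem _
          set n : ℕ := (q : A[X]).natDegree with hn
          -- top coefficient
          obtain ⟨c, hc⟩ := q.2 n
          have hcLn : c ∈ L n := ⟨q, hqI, degree_le_natDegree, hc⟩
          set m : ℕ := min n N with hm
          have hmn : m ≤ n := min_le_left _ _
          have hmN : m ≤ N := min_le_right _ _
          have hcLm : c ∈ L m := by
            rcases le_or_gt n N with h | h
            · have h' : m = n := min_eq_left h
              rw [h']; exact hcLn
            · have h' : m = N := min_eq_right h.le
              rw [h', hNL n h.le]; exact hcLn
          -- write c as combination of generators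
          rw [← hS m] at hcLm
          obtain ⟨f, -, hf⟩ := Submodule.mem_span_finset.mp hcLm
          -- the multipliers
          have hb : ∀ s : A, ∃ b : A[X], b ∈ B ∧ b.natDegree ≤ n - m ∧
              ∀ p : A[X], p.coeff m = a ^ m * s →
                (b * p).coeff n = a ^ n * (f s * s) := by
            intro s
            obtain ⟨x', hx'⟩ := pow_push_left ha₂ m (f s)
            refine ⟨monomial (n - m) (a ^ (n - m) * x'), ?_, natDegree_monomial_le _, ?_⟩
            · intro i
              rw [coeff_monomial]
              split_ifs with h
              · exact ⟨x', by rw [h]⟩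
              · exact ⟨0, by simp⟩
            · intro p hp
              have e1 : (monomial (n - m) (a ^ (n - m) * x') : A[X]) * p
                  = C (a ^ (n - m) * x') * (p * X ^ (n - m)) := by
                rw [← X_pow_mul, ← mul_assoc, C_mul_X_pow_eq_monomial]
              rw [e1, coeff_C_mul]
              have e3 : m + (n - m) = n := by omega
              have e2 : (p * X ^ (n - m)).coeff (m + (n - m)) = p.coeff m :=
                coeff_mul_X_pow p (n - m) m
              rw [e3] at e2
              rw [e2, hp, mul_assoc, ← mul_assoc x', hx', ← mul_assoc, ← mul_assoc,
                ← pow_add]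
              have e4 : n - m + m = n := by omega
              rw [e4, mul_assoc]
          choose b hbB hbdeg hbcoeff using hb
          -- the correction term
          set r : B := ∑ s ∈ S m, (⟨b s, hbB s⟩ : B) * w m s with hr
          have hrT : r ∈ Ideal.span (T : Set B) := by
            refine Submodule.sum_mem _ fun s hs => ?_
            have hsT : w m s ∈ T := by
              rw [hT]
              exact Finset.mem_biUnion.mpr ⟨m, Finset.mem_range.mpr (by omega),
                Finset.mem_image_of_mem _ hs⟩
            exact Ideal.mul_mem_left _ _ (Ideal.subset_span hsT)
          have hrI : r ∈ I := by
            refine Submodule.sum_mem _ fun s hs => ?_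
            exact Ideal.mul_mem_left _ _ (hwI m s)
          -- properties of each summand
          have hsummand : ∀ s ∈ S m,
              ((((⟨b s, hbB s⟩ : B) * w m s : B) : A[X])).natDegree ≤ n ∧
              ((((⟨b s, hbB s⟩ : B) * w m s : B) : A[X])).coeff n = a ^ n * (f s * s) := by
            intro s hs
            have hsL : s ∈ L m := by
              rw [← hS m]
              exact Submodule.subset_span (Finset.mem_coe.mpr hs)
            obtain ⟨hwd, hwc⟩ := hwspec m s hsL
            constructor
            · push_cast
              refine le_trans natDegree_mul_le ?_
              have h1 : ((w m s : B) : A[X]).natDegree ≤ m := natDegree_le_iff_degree_le.mpr hwd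
              have h2 := hbdeg s
              omega
            · push_cast
              exact hbcoeff s _ hwc
          -- the remainder
          set q' : B := q - r with hq'
          have hq'I : q' ∈ I := I.sub_mem hqI hrI
          have hrcoe : ((r : B) : A[X]) = ∑ s ∈ S m, (((⟨b s, hbB s⟩ : B) * w m s : B) : A[X]) := by
            rw [hr]
            push_cast
            rfl
          have hq'coeff : ∀ j, n ≤ j → ((q' : B) : A[X]).coeff j = 0 := by
            intro j hj
            have hcoe : ((q' : B) : A[X]) = (q : A[X]) - ((r : B) : A[X]) := by
              rw [hq']; push_cast; ring
            rcases eq_or_lt_of_le hj with h | h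
            · subst h
              rw [hcoe, coeff_sub, hrcoe, finset_sum_coeff]
              have e5 : ∑ s ∈ S m, ((((⟨b s, hbB s⟩ : B) * w m s : B) : A[X])).coeff n
                  = a ^ n * c := by
                rw [Finset.sum_congr rfl (fun s hs => (hsummand s hs).2)]
                rw [← Finset.mul_sum]
                congr 1
              rw [e5, hc, sub_self]
            · rw [hcoe, coeff_sub, hrcoe, finset_sum_coeff]
              rw [coeff_eq_zero_of_natDegree_lt (by omega : (q : A[X]).natDegree < j)]
              rw [Finset.sum_eq_zero (fun s hs =>
                coeff_eq_zero_of_natDegree_lt (lt_of_le_of_lt (hsummand s hs).1 h))]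
              simp
          have hdq' : ((q' : B) : A[X]).degree < (n : ℕ) :=
            (degree_lt_iff_coeff_zero _ n).mpr hq'coeff
          have hqsplit : q = q' + r := by rw [hq']; abel
          by_cases hq'0 : q' = 0
          · rw [hqsplit, hq'0, zero_add]
            exact hrT
          · have hq'ne : ((q' : B) : A[X]) ≠ 0 := fun hcon => hq'0 (Subtype.ext hcon)
            have hlt : ((q' : B) : A[X]).natDegree < n :=
              (natDegree_lt_iff_degree_lt hq'ne).mpr hdq'
            have hq'span : q' ∈ Ideal.span (T : Set B) :=
              ih (((q' : B) : A[X]).natDegree) (by omega) q' hq'I le_rfl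
            rw [hqsplit]
            exact Ideal.add_mem _ hq'span hrT
      exact key ((q : A[X]).natDegree) q hqI le_rfl
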